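/- Let R and Q be two orthogonal projectors on a finite-dimensional complex Hilbert space. Then the space decomposes into an orthogonal direct sum of subspaces of dimension at most 2, each invariant under both R and Q. -/

import Mathlib

open scoped InnerProductSpace

lemma jordan_aux {H : Type*} [NormedAddCommGroup H] [InnerProductSpace ℂ H]
    [FiniteDimensional ℂ H] (R Q : H →ₗ[ℂ] H)
    (hR : R ∘ₗ R = R) (hRa : LinearMap.adjoint R = R)
    (hQ : Q ∘ₗ Q = Q) (hQa : LinearMap.adjoint Q = Q) :
    ∀ n : ℕ, ∀ W : Submodule ℂ H, Module.finrank ℂ W = n →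
    (∀ x ∈ W, R x ∈ W ∧ Q x ∈ W) →
    ∃ (m : ℕ) (V : Fin m → Submodule ℂ H),
      (∀ i j, i ≠ j → ∀ x ∈ V i, ∀ y ∈ V j, ⟪x, y⟫_ℂ = 0) ∧
      (∀ i, Module.finrank ℂ (V i) ≤ 2) ∧
      (∀ i, ∀ x ∈ V i, R x ∈ V i ∧ Q x ∈ V i) ∧
      (⨆ i, V i) = W := by
  intro n
  induction n using Nat.strong_induction_on with
  | _ n ih =>
  intro W hWn hWinv
  rcases eq_or_ne W ⊥ with hbot | hbot
  · refine ⟨0, fun i => i.elim0, ?_, ?_, ?_, ?_⟩ <;> first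
      | exact fun i => i.elim0
      | simp [hbot]
  · have hWnt : Nontrivial W := Submodule.nontrivial_iff_ne_bot.2 hbot
    -- eigenvector of (R+Q) restricted to W
    have hTW : ∀ x ∈ W, (R + Q) x ∈ W := by
      intro x hx
      simpa using W.add_mem (hWinv x hx).1 (hWinv x hx).2
    set T' : Module.End ℂ W := (R + Q).restrict hTW with hT'
    obtain ⟨μ, hμ⟩ := Module.End.exists_eigenvalue T'
    obtain ⟨v, hv⟩ := hμ.exists_hasEigenvector
    have hv0 : (v : H) ≠ 0 := fun h => hv.2 (Subtype.coe_injective (by simpa using h))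
    have hvW : (v : H) ∈ W := v.2
    have heig : R (v : H) + Q (v : H) = μ • (v : H) := by
      have := congrArg (Subtype.val) hv.apply_eq_smul
      simpa [hT', LinearMap.restrict_coe_apply] using this
    have hRR : ∀ x, R (R x) = R x := fun x => by
      have := congrFun (congrArg (fun f => f.toFun) hR) x; simpa using this
    have hQQ : ∀ x, Q (Q x) = Q x := fun x => by
      have := congrFun (congrArg (fun f => f.toFun) hQ) x; simpa using this
    set U : Submodule ℂ H := Submodule.span ℂ {(v : H), R (v : H)} with hU
    have hvU : (v : H) ∈ U := Submodule.subset_span (by simp)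
    have hRvU : R (v : H) ∈ U := Submodule.subset_span (by simp)
    have hQv : Q (v : H) = μ • (v : H) - R (v : H) := by
      rw [← heig]; abel
    have hQRv : Q (R (v : H)) = (μ * μ - μ) • (v : H) + (1 - μ) • R (v : H) := by
      have h1 : Q (Q (v : H)) = Q (v : H) := hQQ _
      rw [hQv] at h1
      have h2 : μ • Q (v:H) - Q (R (v:H)) = μ • (v:H) - R (v:H) := by
        simpa [map_sub, map_smul] using h1
      have h3 : Q (R (v:H)) = μ • Q (v:H) - (μ • (v:H) - R (v:H)) := by
        rw [← h2]; abel
      rw [h3, hQv]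
      module
    have hUinv : ∀ x ∈ U, R x ∈ U ∧ Q x ∈ U := by
      intro x hx
      constructor
      · refine Submodule.span_induction ?_ ?_ ?_ ?_ hx
        · rintro y hy
          rcases hy with h | h
          · rw [h]; exact hRvU
          · simp at h; rw [h, hRR]; exact hRvU
        · simp
        · intro a b _ _ ha hb; rw [map_add]; exact U.add_mem ha hb
        · intro c a _ ha; rw [map_smul]; exact U.smul_mem c ha
      · refine Submodule.span_induction ?_ ?_ ?_ ?_ hx
        · rintro y hy
          rcases hy with h | h
          · rw [h, hQv]; exact U.sub_mem (U.smul_mem _ hvU) hRvU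
          · simp at h; rw [h, hQRv]
            exact U.add_mem (U.smul_mem _ hvU) (U.smul_mem _ hRvU)
        · simp
        · intro a b _ _ ha hb; rw [map_add]; exact U.add_mem ha hb
        · intro c a _ ha; rw [map_smul]; exact U.smul_mem c ha
    have hUW : U ≤ W := by
      rw [hU, Submodule.span_le]
      rintro y (h | h)
      · rw [h]; exact hvW
      · simp at h; rw [h]; exact (hWinv _ hvW).1
    have hUne : U ≠ ⊥ := by
      intro h
      exact hv0 (by simpa [h] using hvU)
    have hsing : ∀ x : H, Module.finrank ℂ (ℂ ∙ x) ≤ 1 := by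
      intro x
      rcases eq_or_ne x 0 with rfl | hx
      · rw [Submodule.span_zero_singleton]; simp
      · rw [finrank_span_singleton hx]
    have hUrank : Module.finrank ℂ U ≤ 2 := by
      have hUeq : U = (ℂ ∙ (v : H)) ⊔ (ℂ ∙ R (v : H)) := by
        rw [hU, Submodule.span_insert]
      have h1 := Submodule.finrank_sup_add_finrank_inf_eq (ℂ ∙ (v : H)) (ℂ ∙ R (v : H))
      have h2 := hsing (v : H)
      have h3 := hsing (R (v : H))
      rw [hUeq]
      omega
    -- W' : orthogonal complement of U inside W
    set W' : Submodule ℂ H := Uᗮ ⊓ W with hW'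
    have hsup : U ⊔ W' = W := Submodule.sup_orthogonal_inf_of_hasOrthogonalProjection hUW
    have hdisj : Disjoint U W' := by
      exact (Submodule.orthogonal_disjoint U).mono_right inf_le_left
    have key : ∀ (S : H →ₗ[ℂ] H), LinearMap.adjoint S = S → (∀ u ∈ U, S u ∈ U) →
        ∀ x ∈ Uᗮ, S x ∈ Uᗮ := by
      intro S hSa hSU x hxU
      intro u hu
      have h1 : ⟪u, S x⟫_ℂ = ⟪S u, x⟫_ℂ := by
        conv_lhs => rw [← hSa, LinearMap.adjoint_inner_right]
      rw [h1]
      exact hxU _ (hSU u hu)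
    have hW'inv : ∀ x ∈ W', R x ∈ W' ∧ Q x ∈ W' := by
      intro x hx
      have hxU : x ∈ Uᗮ := hx.1
      have hxW : x ∈ W := hx.2
      exact ⟨⟨key R hRa (fun u hu => (hUinv u hu).1) x hxU, (hWinv x hxW).1⟩,
             ⟨key Q hQa (fun u hu => (hUinv u hu).2) x hxU, (hWinv x hxW).2⟩⟩
    have hrank : Module.finrank ℂ W' < n := by
      have h1 : Module.finrank ℂ U + Module.finrank ℂ W' = Module.finrank ℂ W := by
        have := Submodule.finrank_sup_add_finrank_inf_eq U W'
        rw [hsup, (disjoint_iff.1 hdisj)] at this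
        simpa using this.symm
      have h2 : 0 < Module.finrank ℂ U := Module.finrank_pos_iff.2
        (Submodule.nontrivial_iff_ne_bot.2 hUne)
      omega
    obtain ⟨m, V', horth', hrk', hinv', hsup'⟩ := ih _ hrank W' rfl hW'inv
    have hV'le : ∀ j, V' j ≤ Uᗮ := fun j => (le_iSup V' j).trans (hsup'.le.trans inf_le_left)
    refine ⟨m + 1, Fin.cons U V', ?_, ?_, ?_, ?_⟩
    · intro i j hij
      rcases Fin.eq_zero_or_eq_succ i with rfl | ⟨i', rfl⟩ <;>
        rcases Fin.eq_zero_or_eq_succ j with rfl | ⟨j', rfl⟩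
      · exact absurd rfl hij
      · intro x hx y hy
        simp only [Fin.cons_zero, Fin.cons_succ] at hx hy
        exact ((Submodule.mem_orthogonal _ _).1 (hV'le _ hy) x hx)
      · intro x hx y hy
        simp only [Fin.cons_zero, Fin.cons_succ] at hx hy
        have := (Submodule.mem_orthogonal _ _).1 (hV'le _ hx) y hy
        rw [← inner_conj_symm, this, map_zero]
      · intro x hx y hy
        simp only [Fin.cons_succ] at hx hy
        exact horth' i' j' (fun h => hij (by rw [h])) x hx y hy
    · intro i
      refine Fin.cases ?_ ?_ i
      · exact hUrank
      · intro j; exact hrk' j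
    · intro i
      refine Fin.cases ?_ ?_ i
      · simpa using hUinv
      · intro j; simpa using hinv' j
    · have hcons : (⨆ i, (Fin.cons U V' : Fin (m+1) → Submodule ℂ H) i) = U ⊔ ⨆ j, V' j := by
        apply le_antisymm
        · apply iSup_le; intro i
          rcases Fin.eq_zero_or_eq_succ i with rfl | ⟨i', rfl⟩
          · simp
          · simp only [Fin.cons_succ]; exact le_sup_of_le_right (le_iSup V' i')
        · refine sup_le ?_ ?_
          · exact le_iSup_of_le 0 (by simp)
          · exact iSup_le fun j => le_iSup_of_le j.succ (by simp)
      rw [hcons, hsup', hsup]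

/-- Jordan's lemma: If `R` and `Q` are orthogonal projectors on a
finite-dimensional complex Hilbert space, then the space decomposes into an
orthogonal direct sum of subspaces of dimension at most 2, each invariant
under both `R` and `Q`. -/
theorem stmt0 {H : Type*} [NormedAddCommGroup H] [InnerProductSpace ℂ H]
    [FiniteDimensional ℂ H] (R Q : H →ₗ[ℂ] H)
    (hR : R ∘ₗ R = R) (hRa : LinearMap.adjoint R = R)
    (hQ : Q ∘ₗ Q = Q) (hQa : LinearMap.adjoint Q = Q) :
    ∃ (ι : Type) (_ : Fintype ι) (_ : DecidableEq ι) (V : ι → Submodule ℂ H),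
      DirectSum.IsInternal V ∧
      (∀ i j, i ≠ j → ∀ x ∈ V i, ∀ y ∈ V j, ⟪x, y⟫_ℂ = 0) ∧
      (∀ i, Module.finrank ℂ (V i) ≤ 2) ∧
      (∀ i, ∀ x ∈ V i, R x ∈ V i ∧ Q x ∈ V i) := by
  obtain ⟨m, V, horth, hrk, hinv, hsup⟩ := jordan_aux R Q hR hRa hQ hQa
    (Module.finrank ℂ (⊤ : Submodule ℂ H)) ⊤ rfl (fun x _ => ⟨trivial, trivial⟩)
  have hof : OrthogonalFamily ℂ (fun i => V i) (fun i => (V i).subtypeₗᵢ) :=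
    fun i j hij x y => horth i j hij x x.2 y y.2
  exact ⟨Fin m, inferInstance, inferInstance, V,
    DirectSum.isInternal_submodule_of_iSupIndep_of_iSup_eq_top hof.independent hsup,
    horth, hrk, hinv⟩
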